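/- Let δ > 0, λ > 0 with the same setup as the single-shift-then-hide attack: A = [[1,1],[0,1]], gain K = (k₁, k₂) ∈ ℝ², exact initial tracked state s₀ = (p, v), true state ŝ(n) = (p + n·v, v), shifted observation z = p + v + λ at the attack frame, and φ_δ(x) = max(−δ, min(δ, x)) the clipping function. Define the defended trajectory by s₁ = A·s₀ + φ_δ(z − (A·s₀)₁)·K followed by m prediction-only frames s_{n+1} = A·s_n. Then the perceived position deviation equals (s_{1+m})₁ − ŝ(1+m)₁ = (k₁ + m·k₂)·min(λ, δ); in particular, when λ > δ the deviation under the defense is exactly the factor δ/λ smaller than the deviation (k₁ + m·k₂)·λ of the undefended Kalman filter. -/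

import Mathlib

/-- Discrete-time deterministic core of Proposition 3 (Defense Effectiveness):
with the clipped-innovation security patch, a single shifting frame (shift `lam`)
followed by `m` hiding frames produces a position deviation `(k₁ + m·k₂)·min(lam, δ)`;
in particular, when `lam > δ` the defended deviation is exactly the factor `δ/lam`
smaller than the undefended deviation `(k₁ + m·k₂)·lam`. -/
theorem defended_MOT_hijack_deviation
    (δ lam : ℝ) (hδ : 0 < δ) (hlam : 0 < lam)
    (p v k₁ k₂ : ℝ)
    (φ : ℝ → ℝ) (hφ : ∀ x, φ x = max (-δ) (min δ x))
    (A : Matrix (Fin 2) (Fin 2) ℝ) (hA : A = !![1, 1; 0, 1])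
    (K : Fin 2 → ℝ) (hK : K = ![k₁, k₂])
    (z : ℝ) (hz : z = p + v + lam)
    (sTrue : ℕ → Fin 2 → ℝ) (hsTrue : ∀ n, sTrue n = ![p + (n : ℝ) * v, v])
    (s : ℕ → Fin 2 → ℝ)
    (h0 : s 0 = ![p, v])
    (h1 : s 1 = A.mulVec (s 0) + φ (z - A.mulVec (s 0) 0) • K)
    (hhide : ∀ n, 1 ≤ n → s (n + 1) = A.mulVec (s n))
    (m : ℕ) :
    s (1 + m) 0 - sTrue (1 + m) 0 = (k₁ + (m : ℝ) * k₂) * min lam δ ∧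
      (δ < lam →
        s (1 + m) 0 - sTrue (1 + m) 0 = (δ / lam) * ((k₁ + (m : ℝ) * k₂) * lam)) := by
  set c : ℝ := min lam δ with hc
  have hφc : φ (z - A.mulVec (s 0) 0) = c := by
    rw [hφ, hz, hA, h0]
    simp [Matrix.mulVec, dotProduct, Fin.sum_univ_two]
    rw [min_comm]
    exact max_eq_right (le_trans (le_of_lt (neg_lt_zero.mpr hδ)) (le_min hlam.le hδ.le))
  have h1' : s 1 = ![p + v + c * k₁, v + c * k₂] := by
    rw [h1, hφc, hA, h0, hK]
    funext i
    fin_cases i <;>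
      simp [Matrix.mulVec, dotProduct, Fin.sum_univ_two] <;> ring
  have key : ∀ n : ℕ, s (1 + n) = ![p + (1 + n) * v + c * (k₁ + n * k₂), v + c * k₂] := by
    intro n
    induction n with
    | zero => simpa using h1'
    | succ n ih =>
      have : (1 : ℕ) + (n + 1) = (1 + n) + 1 := by ring
      rw [this, hhide (1 + n) (by omega), ih, hA]
      funext i
      fin_cases i <;>
        simp [Matrix.mulVec, dotProduct, Fin.sum_univ_two] <;> push_cast <;> ring
  have hdev : s (1 + m) 0 - sTrue (1 + m) 0 = (k₁ + (m : ℝ) * k₂) * c := by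
    rw [key m, hsTrue]
    simp
    push_cast
    ring
  refine ⟨hdev, fun hlt => ?_⟩
  rw [hdev, hc, min_eq_right hlt.le]
  field_simp
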